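/- Let (u_k, v_k) ∈ ℝ²₊ for k = 1,…,n. Then there exist triples (a_j, b_j, c_j) ∈ ℝ³₊, j = 1,…,n, such that for all x ≥ 0: max_{1≤k≤n} (u_k x − v_k y)₊ ≥ Σ_{j=1}^n a_j (b_j x − c_j y)₊ for every y ∈ ℝ, with equality whenever y ≥ 0. Here (t)₊ := max(t,0). -/

import Mathlib

open scoped BigOperators

/-- A test: a vector with entries in `[0,1]`. -/
def IsTest {ι : Type*} [Fintype ι] (t : ι → ℝ) : Prop := ∀ i, 0 ≤ t i ∧ t i ≤ 1

/-- Dot product of two vectors. -/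
def dot {ι : Type*} [Fintype ι] (t p : ι → ℝ) : ℝ := ∑ i, t i * p i

/-- `beta x p q` is the infimum of `t ⬝ q` over tests `t` with `t ⬝ p ≥ x`,
with value `⊤` (`+∞`) when no feasible test exists. -/
noncomputable def beta {ι : Type*} [Fintype ι] (x : ℝ) (p q : ι → ℝ) : EReal :=
  sInf {y : EReal | ∃ t : ι → ℝ, IsTest t ∧ x ≤ dot t p ∧ y = ((dot t q : ℝ) : EReal)}

/-- `alpha y p q` is the supremum of `t ⬝ p` over tests `t` with `t ⬝ q ≤ y`. -/
noncomputable def alpha {ι : Type*} [Fintype ι] (y : ℝ) (p q : ι → ℝ) : ℝ :=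
  sSup {x : ℝ | ∃ t : ι → ℝ, IsTest t ∧ dot t q ≤ y ∧ x = dot t p}

/-- A nonnegative matrix all of whose column sums are at most `1`. -/
def Substochastic {ι' ι : Type*} [Fintype ι'] [Fintype ι] (M : Matrix ι' ι ℝ) : Prop :=
  (∀ i j, 0 ≤ M i j) ∧ ∀ j, ∑ i, M i j ≤ 1

/-- A nonnegative matrix all of whose column sums equal `1`. -/
def Stochastic {ι' ι : Type*} [Fintype ι'] [Fintype ι] (M : Matrix ι' ι ℝ) : Prop :=
  (∀ i j, 0 ≤ M i j) ∧ ∀ j, ∑ i, M i j = 1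

/-- Relative submajorization: `(p,q) ≻ (p',q')`. -/
def SubMaj {ι ι' : Type*} [Fintype ι] [Fintype ι'] (p q : ι → ℝ) (p' q' : ι' → ℝ) : Prop :=
  ∃ M : Matrix ι' ι ℝ, Substochastic M ∧
    (∀ i, p' i ≤ M.mulVec p i) ∧ (∀ i, M.mulVec q i ≤ q' i)

/-- Relative majorization: `(p,q) ≽ (p',q')`. -/
def RelMaj {ι ι' : Type*} [Fintype ι] [Fintype ι'] (p q : ι → ℝ) (p' q' : ι' → ℝ) : Prop :=
  ∃ M : Matrix ι' ι ℝ, Stochastic M ∧ M.mulVec p = p' ∧ M.mulVec q = q'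

/-- Approximate relative submajorization: `(p,q) ≻_{ε,η} (p',q')`. -/
def ApproxSubMaj {ι ι' : Type*} [Fintype ι] [Fintype ι'] (ε η : ℝ)
    (p q : ι → ℝ) (p' q' : ι' → ℝ) : Prop :=
  ∃ (M : Matrix ι' ι ℝ) (a b : ι' → ℝ), Substochastic M ∧
    (∀ i, 0 ≤ a i) ∧ (∀ i, 0 ≤ b i) ∧ (∑ i, a i) ≤ ε ∧ (∑ i, b i) ≤ η ∧
    (∀ i, p' i - a i ≤ M.mulVec p i) ∧ (∀ i, M.mulVec q i ≤ q' i + b i)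

/-- Partial sum `∑_{j=1}^k v_{π(j)}` of the first `k` entries of `v` in the order given by `π`. -/
def psum {n : ℕ} (v : Fin n → ℝ) (π : Equiv.Perm (Fin n)) (k : ℕ) : ℝ :=
  ∑ j ∈ Finset.univ.filter (fun j : Fin n => (j : ℕ) < k), v (π j)

/-- `λ*_z(R→R')`: the largest `λ ∈ [0,1]` with `(p,q) ≻ (λ p', z q')`. -/
noncomputable def lambdaStar {ι ι' : Type*} [Fintype ι] [Fintype ι'] (z : ℝ)
    (p q : ι → ℝ) (p' q' : ι' → ℝ) : ℝ :=
  sSup {lam : ℝ | 0 ≤ lam ∧ lam ≤ 1 ∧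
    SubMaj p q (fun i => lam * p' i) (fun i => z * q' i)}

/-- `z*_λ(R→R')`: the smallest `z ≥ 0` with `(p,q) ≻ (λ p', z q')`. -/
noncomputable def zStar {ι ι' : Type*} [Fintype ι] [Fintype ι'] (lam : ℝ)
    (p q : ι → ℝ) (p' q' : ι' → ℝ) : ℝ :=
  sInf {z : ℝ | 0 ≤ z ∧ SubMaj p q (fun i => lam * p' i) (fun i => z * q' i)}

/-- `ε*_z(R→R')`: the smallest error of the first kind. -/
noncomputable def epsStar {ι ι' : Type*} [Fintype ι] [Fintype ι'] (z : ℝ)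
    (p q : ι → ℝ) (p' q' : ι' → ℝ) : ℝ :=
  sInf {ε : ℝ | 0 ≤ ε ∧ ApproxSubMaj ε 0 p q p' (fun i => z * q' i)}

/-- `η̂*_z(R→R')`: the smallest error of the second kind. -/
noncomputable def etaStar {ι ι' : Type*} [Fintype ι] [Fintype ι'] (z : ℝ)
    (p q : ι → ℝ) (p' q' : ι' → ℝ) : ℝ :=
  sInf {η : ℝ | 0 ≤ η ∧ ApproxSubMaj 0 η p q p' (fun i => z * q' i)}

/-- Relative entropy `D(u,v) = Σ u_k ln(u_k/v_k)` (with `0 ln 0 = 0`). -/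
noncomputable def relEnt {ι : Type*} [Fintype ι] (u v : ι → ℝ) : ℝ :=
  ∑ k, u k * Real.log (u k / v k)

namespace Stmt7Aux


/-- envelope: max(0, max_k (u_k x - v_k y)) -/
noncomputable def env2 (L : List (ℝ × ℝ)) (x y : ℝ) : ℝ :=
  (L.map fun p => p.1 * x - p.2 * y).foldr max 0

noncomputable def S2 (T : List (ℝ × ℝ × ℝ)) (x y : ℝ) : ℝ :=
  (T.map fun t => t.1 * max (t.2.1 * x - t.2.2 * y) 0).sum

noncomputable def Pv (T : List (ℝ × ℝ × ℝ)) : ℝ := (T.map fun t => t.1 * t.2.1).sum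
noncomputable def Qv (T : List (ℝ × ℝ × ℝ)) : ℝ := (T.map fun t => t.1 * t.2.2).sum

@[simp] lemma env2_nil (x y : ℝ) : env2 [] x y = 0 := rfl

@[simp] lemma env2_cons (p : ℝ × ℝ) (L : List (ℝ × ℝ)) (x y : ℝ) :
    env2 (p :: L) x y = max (p.1 * x - p.2 * y) (env2 L x y) := rfl

@[simp] lemma S2_nil (x y : ℝ) : S2 [] x y = 0 := rfl

@[simp] lemma S2_cons (t : ℝ × ℝ × ℝ) (T : List (ℝ × ℝ × ℝ)) (x y : ℝ) :
    S2 (t :: T) x y = t.1 * max (t.2.1 * x - t.2.2 * y) 0 + S2 T x y := by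
  simp [S2]

@[simp] lemma Pv_nil : Pv ([] : List (ℝ × ℝ × ℝ)) = 0 := rfl
@[simp] lemma Qv_nil : Qv ([] : List (ℝ × ℝ × ℝ)) = 0 := rfl

@[simp] lemma Pv_cons (t : ℝ × ℝ × ℝ) (T : List (ℝ × ℝ × ℝ)) :
    Pv (t :: T) = t.1 * t.2.1 + Pv T := by simp [Pv]

@[simp] lemma Qv_cons (t : ℝ × ℝ × ℝ) (T : List (ℝ × ℝ × ℝ)) :
    Qv (t :: T) = t.1 * t.2.2 + Qv T := by simp [Qv]

lemma env2_nonneg (L : List (ℝ × ℝ)) (x y : ℝ) : 0 ≤ env2 L x y := by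
  induction L with
  | nil => simp
  | cons p L ih => simp only [env2_cons]; exact le_max_of_le_right ih

lemma le_env2 {p : ℝ × ℝ} {L : List (ℝ × ℝ)} (hp : p ∈ L) (x y : ℝ) :
    p.1 * x - p.2 * y ≤ env2 L x y := by
  induction L with
  | nil => simp at hp
  | cons q L ih =>
    rcases List.mem_cons.mp hp with rfl | hp
    · exact le_max_left _ _
    · exact le_max_of_le_right (ih hp)

lemma env2_le {L : List (ℝ × ℝ)} {x y m : ℝ} (h : ∀ p ∈ L, p.1 * x - p.2 * y ≤ m)
    (h0 : 0 ≤ m) : env2 L x y ≤ m := by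
  induction L with
  | nil => simpa using h0
  | cons q L ih =>
    simp only [env2_cons]
    exact max_le (h q (List.mem_cons_self))
      (ih fun p hp => h p (List.mem_cons_of_mem _ hp))

lemma env2_lt_exists {L : List (ℝ × ℝ)} {x y c : ℝ} (hc : 0 ≤ c)
    (h : c < env2 L x y) : ∃ p ∈ L, c < p.1 * x - p.2 * y := by
  induction L with
  | nil => simp at h; linarith
  | cons q L ih =>
    rw [env2_cons] at h
    rcases lt_max_iff.mp h with h | h
    · exact ⟨q, List.mem_cons_self, h⟩
    · obtain ⟨p, hp, h⟩ := ih h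
      exact ⟨p, List.mem_cons_of_mem _ hp, h⟩

lemma env2_perm {L L' : List (ℝ × ℝ)} (h : L.Perm L') (x y : ℝ) :
    env2 L x y = env2 L' x y := by
  induction h with
  | nil => rfl
  | cons p _ ih => simp only [env2_cons, ih]
  | swap p q l => simp only [env2_cons]; rw [max_left_comm]
  | trans _ _ ih1 ih2 => rw [ih1, ih2]

lemma env2_homo {x : ℝ} (hx : 0 ≤ x) (L : List (ℝ × ℝ)) (s : ℝ) :
    env2 L x (x * s) = x * env2 L 1 s := by
  induction L with
  | nil => simp
  | cons p L ih =>
    simp only [env2_cons, ih, mul_max_of_nonneg _ _ hx]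
    congr 1
    ring

lemma S2_homo {x : ℝ} (hx : 0 ≤ x) (T : List (ℝ × ℝ × ℝ)) (s : ℝ) :
    S2 T x (x * s) = x * S2 T 1 s := by
  induction T with
  | nil => simp
  | cons t T ih =>
    simp only [S2_cons, ih]
    have : max (t.2.1 * x - t.2.2 * (x * s)) 0 = x * max (t.2.1 * 1 - t.2.2 * s) 0 := by
      rw [mul_max_of_nonneg _ _ hx]
      congr 1 <;> ring
    rw [this]; ring

lemma S2_neg {T : List (ℝ × ℝ × ℝ)}
    (hpos : ∀ t ∈ T, 0 ≤ t.1 ∧ 0 ≤ t.2.1 ∧ 0 ≤ t.2.2) {s : ℝ} (hs : s ≤ 0) :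
    S2 T 1 s = Pv T - Qv T * s := by
  induction T with
  | nil => simp
  | cons t T ih =>
    obtain ⟨h1, h2, h3⟩ := hpos t (List.mem_cons_self)
    rw [S2_cons, Pv_cons, Qv_cons, ih (fun r hr => hpos r (List.mem_cons_of_mem _ hr))]
    rw [max_eq_left (by nlinarith)]
    ring

lemma S2_x0_neg {T : List (ℝ × ℝ × ℝ)}
    (hpos : ∀ t ∈ T, 0 ≤ t.1 ∧ 0 ≤ t.2.1 ∧ 0 ≤ t.2.2) {y : ℝ} (hy : y ≤ 0) :
    S2 T 0 y = -(Qv T * y) := by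
  induction T with
  | nil => simp
  | cons t T ih =>
    obtain ⟨h1, h2, h3⟩ := hpos t (List.mem_cons_self)
    rw [S2_cons, Qv_cons, ih (fun r hr => hpos r (List.mem_cons_of_mem _ hr))]
    rw [max_eq_left (by nlinarith)]
    ring

lemma S2_x0_pos {T : List (ℝ × ℝ × ℝ)}
    (hpos : ∀ t ∈ T, 0 ≤ t.1 ∧ 0 ≤ t.2.1 ∧ 0 ≤ t.2.2) {y : ℝ} (hy : 0 ≤ y) :
    S2 T 0 y = 0 := by
  induction T with
  | nil => simp
  | cons t T ih =>
    obtain ⟨h1, h2, h3⟩ := hpos t (List.mem_cons_self)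
    rw [S2_cons, ih (fun r hr => hpos r (List.mem_cons_of_mem _ hr))]
    rw [max_eq_right (by nlinarith)]
    ring

lemma S2_small {T : List (ℝ × ℝ × ℝ)}
    (hpos : ∀ t ∈ T, 0 ≤ t.1 ∧ 0 ≤ t.2.1 ∧ 0 ≤ t.2.2)
    (hjunk : ∀ t ∈ T, t.2.1 = 0 → t.1 * t.2.2 = 0) :
    ∃ ε > 0, ∀ σ, 0 < σ → σ < ε → S2 T 1 σ = Pv T - Qv T * σ := by
  induction T with
  | nil => exact ⟨1, by norm_num, fun σ _ _ => by simp⟩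
  | cons t T ih =>
    obtain ⟨ε, hε, h⟩ := ih (fun r hr => hpos r (List.mem_cons_of_mem _ hr))
      (fun r hr => hjunk r (List.mem_cons_of_mem _ hr))
    obtain ⟨h1, h2, h3⟩ := hpos t (List.mem_cons_self)
    rcases eq_or_lt_of_le h2 with hb | hb
    · refine ⟨ε, hε, fun σ hσ1 hσ2 => ?_⟩
      have hj := hjunk t (List.mem_cons_self) hb.symm
      rw [S2_cons, Pv_cons, Qv_cons, h σ hσ1 hσ2, max_eq_right (by nlinarith)]
      rw [← hb]
      linear_combination σ * hj
    · refine ⟨min ε (t.2.1 / (t.2.2 + 1)), lt_min hε (by positivity), fun σ hσ1 hσ2 => ?_⟩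
      have hσε : σ < ε := lt_of_lt_of_le hσ2 (min_le_left _ _)
      have h4 : σ < t.2.1 / (t.2.2 + 1) := lt_of_lt_of_le hσ2 (min_le_right _ _)
      have h5 : σ * (t.2.2 + 1) < t.2.1 := (lt_div_iff₀ (by linarith)).mp h4
      rw [S2_cons, Pv_cons, Qv_cons, h σ hσ1 hσε, max_eq_left (by nlinarith)]
      ring


lemma exists_lead : ∀ (l : List (ℝ × ℝ)), l ≠ [] →
    ∃ a ∈ l, ∀ b ∈ l, b.1 < a.1 ∨ (b.1 = a.1 ∧ a.2 ≤ b.2) := by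
  intro l h
  induction l with
  | nil => exact absurd rfl h
  | cons p l ih =>
    rcases eq_or_ne l [] with rfl | hl
    · refine ⟨p, List.mem_cons_self, fun b hb => ?_⟩
      rcases List.mem_cons.mp hb with rfl | hb
      · exact Or.inr ⟨rfl, le_rfl⟩
      · simp at hb
    · obtain ⟨a, ha, hmax⟩ := ih hl
      rcases lt_trichotomy p.1 a.1 with hc | hc | hc
      · refine ⟨a, List.mem_cons_of_mem _ ha, fun b hb => ?_⟩
        rcases List.mem_cons.mp hb with rfl | hb
        · exact Or.inl hc
        · exact hmax b hb
      · rcases le_total a.2 p.2 with hd | hd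
        · refine ⟨a, List.mem_cons_of_mem _ ha, fun b hb => ?_⟩
          rcases List.mem_cons.mp hb with rfl | hb
          · exact Or.inr ⟨hc, hd⟩
          · exact hmax b hb
        · refine ⟨p, List.mem_cons_self, fun b hb => ?_⟩
          rcases List.mem_cons.mp hb with rfl | hb
          · exact Or.inr ⟨rfl, le_rfl⟩
          · rcases hmax b hb with he | he
            · exact Or.inl (by linarith)
            · exact Or.inr ⟨by linarith [he.1], by linarith [he.2]⟩
      · refine ⟨p, List.mem_cons_self, fun b hb => ?_⟩
        rcases List.mem_cons.mp hb with rfl | hb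
        · exact Or.inr ⟨rfl, le_rfl⟩
        · rcases hmax b hb with he | he
          · exact Or.inl (by linarith)
          · exact Or.inl (by linarith [he.1])

lemma exists_argmin {α : Type*} (f : α → ℝ) : ∀ (l : List α), l ≠ [] →
    ∃ a ∈ l, ∀ b ∈ l, f a ≤ f b := by
  intro l h
  induction l with
  | nil => exact absurd rfl h
  | cons p l ih =>
    rcases eq_or_ne l [] with rfl | hl
    · refine ⟨p, List.mem_cons_self, fun b hb => ?_⟩
      rcases List.mem_cons.mp hb with rfl | hb
      · exact le_rfl
      · simp at hb
    · obtain ⟨a, ha, hmin⟩ := ih hl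
      rcases le_total (f p) (f a) with hc | hc
      · refine ⟨p, List.mem_cons_self, fun b hb => ?_⟩
        rcases List.mem_cons.mp hb with rfl | hb
        · exact le_rfl
        · exact hc.trans (hmin b hb)
      · refine ⟨a, List.mem_cons_of_mem _ ha, fun b hb => ?_⟩
        rcases List.mem_cons.mp hb with rfl | hb
        · exact hc
        · exact hmin b hb


set_option maxHeartbeats 1000000 in
lemma main : ∀ (N : ℕ) (L : List (ℝ × ℝ)), L.length ≤ N →
    (∀ p ∈ L, 0 ≤ p.1 ∧ 0 ≤ p.2) →
    ∃ T : List (ℝ × ℝ × ℝ), T.length = L.length ∧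
      (∀ t ∈ T, 0 ≤ t.1 ∧ 0 ≤ t.2.1 ∧ 0 ≤ t.2.2) ∧
      (∀ t ∈ T, t.2.1 = 0 → t.1 * t.2.2 = 0) ∧
      (∀ s : ℝ, 0 ≤ s → S2 T 1 s = env2 L 1 s) ∧
      ((Pv T = 0 ∧ Qv T = 0) ∨ ∃ p ∈ L, Pv T ≤ p.1 ∧ Qv T ≤ p.2) := by
  intro N
  induction N with
  | zero =>
    intro L hlen _
    have hL : L = [] := List.length_eq_zero_iff.mp (Nat.le_zero.mp hlen)
    subst hL
    exact ⟨[], rfl, by simp, by simp, fun s _ => by simp, Or.inl ⟨rfl, rfl⟩⟩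
  | succ N ih =>
    intro L hlen hpos
    rcases eq_or_ne L [] with rfl | hL
    · exact ⟨[], rfl, by simp, by simp, fun s _ => by simp, Or.inl ⟨rfl, rfl⟩⟩
    by_cases H : ∃ (p : ℝ × ℝ) (L' : List (ℝ × ℝ)), L.Perm (p :: L') ∧
        ∀ s : ℝ, 0 ≤ s → max (p.1 * 1 - p.2 * s) 0 ≤ env2 L' 1 s
    · -- redundant case
      obtain ⟨p, L', hperm, hred⟩ := H
      have hlen' : L'.length ≤ N := by
        have := hperm.length_eq; simp at this; omega
      have hpos' : ∀ q ∈ L', 0 ≤ q.1 ∧ 0 ≤ q.2 := fun q hq =>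
        hpos q (hperm.mem_iff.mpr (List.mem_cons_of_mem _ hq))
      obtain ⟨T', hT'len, hT'pos, hT'junk, hT'eq, hT'pq⟩ := ih L' hlen' hpos'
      refine ⟨(0, 0, 0) :: T', ?_, ?_, ?_, ?_, ?_⟩
      · have := hperm.length_eq; simp at this; simp [hT'len, this]
      · intro t ht
        rcases List.mem_cons.mp ht with rfl | ht
        · norm_num
        · exact hT'pos t ht
      · intro t ht
        rcases List.mem_cons.mp ht with rfl | ht
        · intro _; norm_num
        · exact hT'junk t ht
      · intro s hs
        rw [env2_perm hperm, env2_cons, S2_cons, hT'eq s hs,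
          max_eq_right (le_trans (le_max_left _ 0) (hred s hs))]
        ring
      · rcases hT'pq with h | ⟨q, hq, h1, h2⟩
        · exact Or.inl ⟨by simp [h.1], by simp [h.2]⟩
        · exact Or.inr ⟨q, hperm.mem_iff.mpr (List.mem_cons_of_mem _ hq),
            by simpa using h1, by simpa using h2⟩
    · -- no redundant line
      obtain ⟨pst, hpmem, hlex⟩ := exists_lead L hL
      obtain ⟨rest, hperm⟩ : ∃ r : List (ℝ × ℝ), L.Perm (pst :: r) :=
        ⟨_, List.perm_cons_erase hpmem⟩
      have hmemL : ∀ q ∈ rest, q ∈ L := fun q hq =>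
        hperm.mem_iff.mpr (List.mem_cons_of_mem _ hq)
      have hposrest : ∀ q ∈ rest, 0 ≤ q.1 ∧ 0 ≤ q.2 := fun q hq => hpos q (hmemL q hq)
      have hub : ∀ q ∈ rest, q.1 ≤ pst.1 := by
        intro q hq
        rcases hlex q (hmemL q hq) with h | h
        · exact h.le
        · exact h.1.le
      have hus : 0 < pst.1 := by
        rcases lt_or_ge 0 pst.1 with h | h
        · exact h
        · exfalso
          apply H
          refine ⟨pst, rest, hperm, fun s hs => ?_⟩
          apply max_le _ (env2_nonneg _ _ _)
          have h1 := (hpos pst hpmem).1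
          have h2 := (hpos pst hpmem).2
          have : pst.1 = 0 := le_antisymm h h1
          nlinarith [env2_nonneg rest 1 s]
      rcases le_or_gt pst.2 0 with hvs | hvs
      · -- flat leader: pst.2 = 0
        have hv0 : pst.2 = 0 := le_antisymm hvs (hpos pst hpmem).2
        rcases eq_or_ne rest [] with hrnil | hrne
        · refine ⟨[(1, pst.1, 0)], ?_, ?_, ?_, ?_, ?_⟩
          · have := hperm.length_eq; rw [hrnil] at this; simp [this]
          · intro t ht; simp at ht; subst ht; norm_num [hus.le]
          · intro t ht; simp at ht; subst ht; intro _; norm_num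
          · intro s hs
            rw [env2_perm hperm, hrnil]
            simp only [S2_cons, S2_nil, env2_cons, env2_nil]
            rw [hv0]
            rw [max_eq_left (by nlinarith : (0:ℝ) ≤ pst.1 * 1 - 0 * s)]
            ring
          · exact Or.inr ⟨pst, hpmem, by simp, by simp [(hpos pst hpmem).2]⟩
        · exfalso
          obtain ⟨q, hq⟩ := List.exists_mem_of_ne_nil rest hrne
          obtain ⟨rest2, hperm2⟩ : ∃ r : List (ℝ × ℝ), rest.Perm (q :: r) :=
            ⟨_, List.perm_cons_erase hq⟩
          apply H
          refine ⟨q, pst :: rest2, ?_, ?_⟩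
          · exact hperm.trans ((hperm2.cons pst).trans (List.Perm.swap _ _ _))
          · intro s hs
            rw [env2_cons]
            have hq1 : q.1 * 1 - q.2 * s ≤ pst.1 * 1 - pst.2 * s := by
              have h1 := hub q hq
              have h2 := (hposrest q hq).2
              nlinarith
            refine max_le (le_max_of_le_left hq1) (le_max_of_le_left ?_)
            nlinarith
      · -- sloped leader: 0 < pst.2
        set f : ℝ × ℝ → ℝ :=
          fun q => if q.2 < pst.2 then (pst.1 - q.1) / (pst.2 - q.2) else pst.1 / pst.2
          with hf
        have hfeq : ∀ q : ℝ × ℝ,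
            f q = if q.2 < pst.2 then (pst.1 - q.1) / (pst.2 - q.2) else pst.1 / pst.2 :=
          fun q => rfl
        obtain ⟨j1, hj1mem, hj1min⟩ := exists_argmin f ((0, 0) :: rest) (by simp)
        set UV : ℝ × ℝ := if j1.2 < pst.2 then j1 else (0, 0) with hUVdef
        have hUVcases : UV = (0, 0) ∨ UV ∈ rest := by
          by_cases hc : j1.2 < pst.2
          · rw [hUVdef, if_pos hc]
            rcases List.mem_cons.mp hj1mem with h | h
            · exact Or.inl h
            · exact Or.inr h
          · rw [hUVdef, if_neg hc]; exact Or.inl rfl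
        have hV : UV.2 < pst.2 := by
          by_cases hc : j1.2 < pst.2
          · rw [hUVdef, if_pos hc]; exact hc
          · rw [hUVdef, if_neg hc]; exact hvs
        have hU0 : 0 ≤ UV.1 := by
          rcases hUVcases with h | h
          · rw [h]
          · exact (hposrest _ h).1
        have hV0 : 0 ≤ UV.2 := by
          rcases hUVcases with h | h
          · rw [h]
          · exact (hposrest _ h).2
        have hU : UV.1 < pst.1 := by
          rcases hUVcases with h | h
          · rw [h]; exact hus
          · rcases hlex UV (hmemL UV h) with hh | hh
            · exact hh
            · exact absurd hV (not_lt.mpr hh.2)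
        have hfUV : f UV = (pst.1 - UV.1) / (pst.2 - UV.2) := by
          rw [hfeq, if_pos hV]
        have hminf : ∀ q ∈ (0, 0) :: rest, f UV ≤ f q := by
          intro q hq
          have : f UV = f j1 := by
            by_cases hc : j1.2 < pst.2
            · rw [hUVdef, if_pos hc]
            · rw [hfUV, hUVdef, if_neg hc, hfeq j1, if_neg hc]
              norm_num
          rw [this]; exact hj1min q hq
        clear_value f
        set s1 : ℝ := (pst.1 - UV.1) / (pst.2 - UV.2) with hs1def
        have hs1pos : 0 < s1 := div_pos (by linarith) (by linarith)
        have hden : pst.2 - UV.2 ≠ 0 := ne_of_gt (by linarith)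
        have hcross : (pst.2 - UV.2) * s1 = pst.1 - UV.1 := by
          rw [hs1def]; field_simp
        have hs1le : ∀ q ∈ rest, q.2 < pst.2 → s1 ≤ (pst.1 - q.1) / (pst.2 - q.2) := by
          intro q hq h2
          have := hminf q (List.mem_cons_of_mem _ hq)
          rwa [hfUV, hfeq q, if_pos h2] at this
        have hs10 : pst.2 * s1 ≤ pst.1 := by
          have h0 := hminf (0, 0) (List.mem_cons_self)
          rw [hfUV] at h0
          have : f (0, 0) = pst.1 / pst.2 := by
            rw [hfeq]; rw [if_pos (by simpa using hvs)]; norm_num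
          rw [this] at h0
          have := (div_le_div_iff₀ (by linarith) hvs).mp h0
          nlinarith
        clear_value s1
        clear_value UV
        have hlam_le : ∀ σ : ℝ, max (UV.1 * 1 - UV.2 * σ) 0 ≤ env2 rest 1 σ := by
          intro σ
          rcases hUVcases with h | h
          · rw [h]; simpa using env2_nonneg rest 1 σ
          · exact max_le (le_env2 h 1 σ) (env2_nonneg _ _ _)
        have hF1 : ∀ q ∈ rest, ∀ τ : ℝ, 0 ≤ τ → τ ≤ s1 →
            q.1 - q.2 * τ ≤ pst.1 - pst.2 * τ := by
          intro q hq τ hτ0 hτ1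
          rcases lt_or_ge q.2 pst.2 with h2 | h2
          · have h3 := le_trans hτ1 (hs1le q hq h2)
            have h4 : τ * (pst.2 - q.2) ≤ pst.1 - q.1 :=
              (le_div_iff₀ (by linarith)).mp h3
            nlinarith
          · have := hub q hq
            nlinarith
        have hbeta : ∀ σ : ℝ, 0 ≤ σ → σ ≤ s1 → env2 rest 1 σ ≤ UV.1 - UV.2 * σ := by
          intro σ h0 h1
          by_contra hcon
          push_neg at hcon
          have hlamnn : 0 ≤ UV.1 - UV.2 * σ := by
            nlinarith [mul_le_mul_of_nonneg_left h1 hV0]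
          obtain ⟨q, hqmem, hq⟩ := env2_lt_exists hlamnn hcon
          have hq' : UV.1 - UV.2 * σ < q.1 - q.2 * σ := by nlinarith
          have hF2 : q.1 - q.2 * s1 ≤ UV.1 - UV.2 * s1 := by
            have := hF1 q hqmem s1 hs1pos.le le_rfl
            nlinarith
          have hσlt : σ < s1 := by
            rcases eq_or_lt_of_le h1 with rfl | h
            · exfalso; linarith
            · exact h
          have hslope : 0 < q.2 - UV.2 := by nlinarith
          have hF4 : ∀ τ : ℝ, s1 ≤ τ → q.1 - q.2 * τ ≤ UV.1 - UV.2 * τ := by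
            intro τ hτ
            nlinarith [mul_le_mul_of_nonneg_left hτ hslope.le]
          obtain ⟨rest2, hperm2⟩ : ∃ r : List (ℝ × ℝ), rest.Perm (q :: r) :=
            ⟨_, List.perm_cons_erase hqmem⟩
          apply H
          refine ⟨q, pst :: rest2, ?_, ?_⟩
          · exact hperm.trans ((hperm2.cons pst).trans (List.Perm.swap _ _ _))
          · intro τ hτ
            rw [env2_cons]
            rcases le_total τ s1 with hcase | hcase
            · refine max_le ?_ (le_max_of_le_right (env2_nonneg _ _ _))
              refine le_max_of_le_left ?_
              have := hF1 q hqmem τ hτ hcase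
              nlinarith
            · have h5 : q.1 - q.2 * τ ≤ UV.1 - UV.2 * τ := hF4 τ hcase
              have h6 : max (UV.1 * 1 - UV.2 * τ) 0 ≤ env2 rest2 1 τ := by
                rcases hUVcases with h | h
                · rw [h]; simpa using env2_nonneg rest2 1 τ
                · have hne : UV ≠ q := by
                    intro e; rw [e] at hq'; linarith
                  have : UV ∈ rest2 := by
                    rcases List.mem_cons.mp (hperm2.mem_iff.mp h) with he | he
                    · exact absurd he hne
                    · exact he
                  exact max_le (le_env2 this 1 τ) (env2_nonneg _ _ _)
              refine max_le ?_ (le_max_of_le_right (env2_nonneg _ _ _))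
              refine le_max_of_le_right ?_
              calc q.1 * 1 - q.2 * τ ≤ UV.1 * 1 - UV.2 * τ := by nlinarith
                _ ≤ max (UV.1 * 1 - UV.2 * τ) 0 := le_max_left _ _
                _ ≤ env2 rest2 1 τ := h6
        -- induction hypothesis on rest
        have hrestlen : rest.length ≤ N := by
          have := hperm.length_eq; simp at this; omega
        obtain ⟨T', hT'len, hT'pos, hT'junk, hT'eq, hT'pq⟩ := ih rest hrestlen hposrest
        obtain ⟨ε, hε, hsmall⟩ := S2_small hT'pos hT'junk
        set m : ℝ := min ε s1 with hm
        have hm0 : 0 < m := lt_min hε hs1pos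
        have key : ∀ σ : ℝ, 0 < σ → σ < m → Pv T' - Qv T' * σ = UV.1 - UV.2 * σ := by
          intro σ h1 h2
          have e1 : S2 T' 1 σ = env2 rest 1 σ := hT'eq σ h1.le
          have e2 : env2 rest 1 σ = UV.1 - UV.2 * σ := by
            refine le_antisymm (hbeta σ h1.le (le_of_lt (lt_of_lt_of_le h2 (min_le_right _ _)))) ?_
            have := le_trans (le_max_left (UV.1 * 1 - UV.2 * σ) 0) (hlam_le σ)
            linarith
          have e3 : S2 T' 1 σ = Pv T' - Qv T' * σ :=
            hsmall σ h1 (lt_of_lt_of_le h2 (min_le_left _ _))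
          linarith
        have hQV : Qv T' = UV.2 := by
          have k1 := key (m / 2) (by linarith) (by linarith)
          have k2 := key (m / 3) (by linarith) (by linarith)
          have h6 : (Qv T' - UV.2) * (m / 2 - m / 3) = 0 := by linear_combination k2 - k1
          rcases mul_eq_zero.mp h6 with h | h
          · linarith [sub_eq_zero.mp h]
          · exfalso; have : m / 2 - m / 3 > 0 := by linarith
            linarith
        have hPU : Pv T' = UV.1 := by
          have k1 := key (m / 2) (by linarith) (by linarith)
          rw [hQV] at k1; linarith
        refine ⟨(1, pst.1 - UV.1, pst.2 - UV.2) :: T', ?_, ?_, ?_, ?_, ?_⟩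
        · have := hperm.length_eq; simp at this; simp [hT'len, this]
        · intro t ht
          rcases List.mem_cons.mp ht with rfl | ht
          · exact ⟨by norm_num, by simp; linarith, by simp; linarith⟩
          · exact hT'pos t ht
        · intro t ht
          rcases List.mem_cons.mp ht with rfl | ht
          · intro h; exfalso; simp at h; linarith
          · exact hT'junk t ht
        · intro s hs
          rw [S2_cons, hT'eq s hs, env2_perm hperm, env2_cons, one_mul]
          rcases le_total s s1 with hcase | hcase
          · have e2 : env2 rest 1 s = UV.1 - UV.2 * s := by
              refine le_antisymm (hbeta s hs hcase) ?_
              have := le_trans (le_max_left (UV.1 * 1 - UV.2 * s) 0) (hlam_le s)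
              linarith
            have hA : 0 ≤ (pst.1 - UV.1) * 1 - (pst.2 - UV.2) * s := by
              nlinarith [mul_le_mul_of_nonneg_left hcase (by linarith : (0:ℝ) ≤ pst.2 - UV.2)]
            rw [max_eq_left hA, e2, max_eq_left (by nlinarith)]
            ring
          · have hA : (pst.1 - UV.1) * 1 - (pst.2 - UV.2) * s ≤ 0 := by
              nlinarith [mul_le_mul_of_nonneg_left hcase (by linarith : (0:ℝ) ≤ pst.2 - UV.2)]
            rw [max_eq_right hA]
            have hle : pst.1 * 1 - pst.2 * s ≤ env2 rest 1 s := by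
              have := le_trans (le_max_left (UV.1 * 1 - UV.2 * s) 0) (hlam_le s)
              nlinarith
            rw [max_eq_right hle]
            ring
        · refine Or.inr ⟨pst, hpmem, ?_, ?_⟩
          · rw [Pv_cons, hPU]; simp
          · rw [Qv_cons, hQV]; simp


lemma sum_map_get {α : Type*} (T : List α) (f : α → ℝ) :
    ∑ j : Fin T.length, f (T.get j) = (T.map f).sum := by
  have h : T.map f = List.ofFn (fun i => f (T.get i)) := by
    conv_lhs => rw [← List.ofFn_get T]
    rw [List.map_ofFn]
    rfl
  rw [h, List.sum_ofFn]

lemma sup_eq_env2 {n : ℕ} (u v : Fin n → ℝ) (x y : ℝ) :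
    (⨆ k : Fin n, max (u k * x - v k * y) 0) = env2 (List.ofFn fun k => (u k, v k)) x y := by
  rcases Nat.eq_zero_or_pos n with rfl | hn
  · simp [env2]
  · have hne : Nonempty (Fin n) := ⟨⟨0, hn⟩⟩
    apply le_antisymm
    · apply ciSup_le
      intro k
      refine max_le ?_ (env2_nonneg _ _ _)
      have : ((u k, v k) : ℝ × ℝ) ∈ List.ofFn fun k => (u k, v k) := by
        rw [List.mem_ofFn]; exact ⟨k, rfl⟩
      exact le_env2 this x y
    · apply env2_le
      · intro p hp
        rw [List.mem_ofFn] at hp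
        obtain ⟨k, rfl⟩ := hp
        exact le_trans (le_max_left _ _)
          (le_ciSup (f := fun k => max (u k * x - v k * y) 0)
            (Set.Finite.bddAbove (Set.finite_range _)) k)
      · exact le_trans (le_max_right (u ⟨0, hn⟩ * x - v ⟨0, hn⟩ * y) 0)
          (le_ciSup (f := fun k => max (u k * x - v k * y) 0)
            (Set.Finite.bddAbove (Set.finite_range _)) (⟨0, hn⟩ : Fin n))


end Stmt7Aux

/-- A maximum of finitely many angle functions `(x,y) ↦ (u_k x − v_k y)₊` agrees on the
positive quadrant with a nonnegative linear combination of angle functions, and dominates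
it for `x ≥ 0`, `y < 0`. -/
theorem stmt_7 {n : ℕ} (u v : Fin n → ℝ) (hu : ∀ k, 0 ≤ u k) (hv : ∀ k, 0 ≤ v k) :
    ∃ a b c : Fin n → ℝ, (∀ j, 0 ≤ a j) ∧ (∀ j, 0 ≤ b j) ∧ (∀ j, 0 ≤ c j) ∧
      ∀ x : ℝ, 0 ≤ x →
        (∀ y : ℝ, (∑ j, a j * max (b j * x - c j * y) 0)
            ≤ ⨆ k : Fin n, max (u k * x - v k * y) 0) ∧
        (∀ y : ℝ, 0 ≤ y →
          (⨆ k : Fin n, max (u k * x - v k * y) 0)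
            = ∑ j, a j * max (b j * x - c j * y) 0) := by
  classical
  set L : List (ℝ × ℝ) := List.ofFn (fun k => (u k, v k)) with hLdef
  have hLlen : L.length = n := by simp [hLdef]
  have hLpos : ∀ p ∈ L, 0 ≤ p.1 ∧ 0 ≤ p.2 := by
    intro p hp
    rw [hLdef, List.mem_ofFn] at hp
    obtain ⟨k, hk⟩ := hp
    rw [← hk]
    exact ⟨hu k, hv k⟩
  obtain ⟨T, hTlen, hTpos, hTjunk, hTeq, hTpq⟩ := Stmt7Aux.main L.length L le_rfl hLpos
  have hTn : T.length = n := hTlen.trans hLlen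
  refine ⟨fun j => (T.get (Fin.cast hTn.symm j)).1,
          fun j => (T.get (Fin.cast hTn.symm j)).2.1,
          fun j => (T.get (Fin.cast hTn.symm j)).2.2,
          fun j => (hTpos _ (T.get_mem _)).1,
          fun j => (hTpos _ (T.get_mem _)).2.1,
          fun j => (hTpos _ (T.get_mem _)).2.2, ?_⟩
  intro x hx
  have hsum : ∀ y : ℝ,
      (∑ j : Fin n, (T.get (Fin.cast hTn.symm j)).1 *
        max ((T.get (Fin.cast hTn.symm j)).2.1 * x - (T.get (Fin.cast hTn.symm j)).2.2 * y) 0)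
      = Stmt7Aux.S2 T x y := by
    intro y
    show _ = (T.map fun t => t.1 * max (t.2.1 * x - t.2.2 * y) 0).sum
    rw [← Stmt7Aux.sum_map_get]
    exact Equiv.sum_comp (finCongr hTn.symm)
      (fun i => (T.get i).1 * max ((T.get i).2.1 * x - (T.get i).2.2 * y) 0)
  have hsup : ∀ y : ℝ,
      (⨆ k : Fin n, max (u k * x - v k * y) 0) = Stmt7Aux.env2 L x y := fun y =>
    Stmt7Aux.sup_eq_env2 u v x y
  have hmain : ∀ y : ℝ, Stmt7Aux.S2 T x y ≤ Stmt7Aux.env2 L x y ∧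
      (0 ≤ y → Stmt7Aux.S2 T x y = Stmt7Aux.env2 L x y) := by
    intro y
    rcases eq_or_lt_of_le hx with rfl | hx0
    · -- x = 0
      constructor
      · rcases le_total 0 y with hy | hy
        · rw [Stmt7Aux.S2_x0_pos hTpos hy]
          exact Stmt7Aux.env2_nonneg _ _ _
        · rw [Stmt7Aux.S2_x0_neg hTpos hy]
          rcases hTpq with ⟨h1, h2⟩ | ⟨p, hp, h1, h2⟩
          · rw [h2]; simpa using Stmt7Aux.env2_nonneg L 0 y
          · have h3 : -(Stmt7Aux.Qv T * y) ≤ p.1 * 0 - p.2 * y := by nlinarith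
            exact h3.trans (Stmt7Aux.le_env2 hp 0 y)
      · intro hy
        rw [Stmt7Aux.S2_x0_pos hTpos hy]
        refine (Stmt7Aux.env2_le ?_ le_rfl).antisymm (Stmt7Aux.env2_nonneg _ _ _) |>.symm
        intro p hp
        have := (hLpos p hp).2
        nlinarith
    · -- x > 0
      have hxy : x * (y / x) = y := by field_simp
      have e1 : Stmt7Aux.S2 T x y = x * Stmt7Aux.S2 T 1 (y / x) := by
        rw [← hxy, Stmt7Aux.S2_homo hx, hxy]
      have e2 : Stmt7Aux.env2 L x y = x * Stmt7Aux.env2 L 1 (y / x) := by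
        rw [← hxy, Stmt7Aux.env2_homo hx, hxy]
      constructor
      · rcases le_total 0 (y / x) with hs | hs
        · rw [e1, e2, hTeq _ hs]
        · rw [e1, e2]
          apply mul_le_mul_of_nonneg_left _ hx
          rw [Stmt7Aux.S2_neg hTpos hs]
          rcases hTpq with ⟨h1, h2⟩ | ⟨p, hp, h1, h2⟩
          · rw [h1, h2]; simpa using Stmt7Aux.env2_nonneg L 1 (y / x)
          · have h3 : Stmt7Aux.Pv T - Stmt7Aux.Qv T * (y / x) ≤ p.1 * 1 - p.2 * (y / x) := by
              nlinarith
            exact h3.trans (Stmt7Aux.le_env2 hp 1 (y / x))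
      · intro hy
        have hs : 0 ≤ y / x := div_nonneg hy hx
        rw [e1, e2, hTeq _ hs]
  constructor
  · intro y
    rw [hsum y, hsup y]
    exact (hmain y).1
  · intro y hy
    rw [hsum y, hsup y]
    exact ((hmain y).2 hy).symm
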